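/- Let B > 0, v > 0 and γ ≥ 1. There do NOT exist functions x : ℝ_{≥0} → [0,1] and p : ℝ_{≥0} → ℝ such that all of the following hold: (1) truthfulness: for all c, b ≥ 0, p(c) − c·x(c) ≥ p(b) − c·x(b); (2) individual rationality: p(b) ≥ b·x(b) for all b ≥ 0; (3) budget feasibility: p(b) ≤ B for all b ≥ 0; and (4) γ-approximation: γ·v·x(b) ≥ v·min(1, B/b) for all b > 0. -/

import Mathlib

/-- Impossibility result from the Introduction of the paper: for a single divisible
agent whose true cost is not assumed to be bounded by the budget, no truthful,
individually rational, budget feasible mechanism has a finite approximation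
guarantee. -/
theorem stmt_10 (B v γ : ℝ) (hB : 0 < B) (hv : 0 < v) (hγ : 1 ≤ γ) :
    ¬ ∃ (x p : ℝ → ℝ),
      -- allocations lie in [0,1]
      (∀ b : ℝ, 0 ≤ b → x b ∈ Set.Icc (0:ℝ) 1) ∧
      -- truthfulness
      (∀ c b : ℝ, 0 ≤ c → 0 ≤ b → p c - c * x c ≥ p b - c * x b) ∧
      -- individual rationality
      (∀ b : ℝ, 0 ≤ b → b * x b ≤ p b) ∧
      -- budget feasibility
      (∀ b : ℝ, 0 ≤ b → p b ≤ B) ∧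
      -- γ-approximation against the fractional optimum v · min(1, B/b)
      (∀ b : ℝ, 0 < b → γ * (v * x b) ≥ v * min 1 (B / b)) := by
  rintro ⟨x, p, hx, htr, hir, hbud, happ⟩
  have hγ0 : (0:ℝ) < γ := lt_of_lt_of_le one_pos hγ
  set b : ℕ → ℝ := fun k => B * 2 ^ k with hb
  have hbpos : ∀ k, 0 < b k := fun k => by positivity
  have hble : ∀ k, B ≤ b k := by
    intro k
    have : (1:ℝ) ≤ 2 ^ k := one_le_pow₀ (by norm_num)
    calc B = B * 1 := by ring
    _ ≤ B * 2 ^ k := by nlinarith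
  -- lower bound on allocation: b k * x (b k) ≥ B / γ
  have hxlb : ∀ k, B / γ ≤ b k * x (b k) := by
    intro k
    have h1 := happ (b k) (hbpos k)
    have hmin : min 1 (B / b k) = B / b k := by
      apply min_eq_right
      rw [div_le_one (hbpos k)]; exact hble k
    rw [hmin] at h1
    have h2 : γ * x (b k) ≥ B / b k := by
      have := (mul_le_mul_iff_right₀ hv).mp (by linarith [h1] : v * (B / b k) ≤ v * (γ * x (b k)))
      linarith
    rw [div_le_iff₀ hγ0]
    have h3 : b k * (γ * x (b k)) ≥ b k * (B / b k) :=
      mul_le_mul_of_nonneg_left h2 (hbpos k).le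
    rw [mul_div_cancel₀ _ (hbpos k).ne'] at h3
    linarith [h3]
  -- the utility sequence
  obtain ⟨u, hu⟩ : ∃ u : ℕ → ℝ, u = fun k => p (b k) - b k * x (b k) := ⟨_, rfl⟩
  have hunn : ∀ k, 0 ≤ u k := fun k => by
    have := hir (b k) (hbpos k).le
    simp only [hu]; linarith
  have hstep : ∀ k, u (k + 1) + B / (2 * γ) ≤ u k := by
    intro k
    have htr' := htr (b k) (b (k + 1)) (hbpos k).le (hbpos (k + 1)).le
    have hdouble : b (k + 1) = 2 * b k := by
      simp only [hb]; ring
    have hhalf : b k * x (b (k + 1)) = b (k + 1) * x (b (k + 1)) / 2 := by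
      rw [hdouble]; ring
    have hlb := hxlb (k + 1)
    have hBγ : B / (2 * γ) = (B / γ) / 2 := by ring
    simp only [hu]
    rw [hBγ]
    have : p (b k) - b k * x (b k) ≥ p (b (k + 1)) - b (k + 1) * x (b (k + 1)) / 2 := by
      linarith [htr', hhalf]
    linarith
  -- u 0 ≥ n * (B / (2γ))
  have hchain : ∀ n : ℕ, (n : ℝ) * (B / (2 * γ)) ≤ u 0 := by
    intro n
    have key : ∀ n : ℕ, u n + (n : ℝ) * (B / (2 * γ)) ≤ u 0 := by
      intro m
      induction m with
      | zero => simp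
      | succ k ih =>
        have := hstep k
        push_cast
        nlinarith [this, ih]
    have := key n
    linarith [hunn n, this]
  -- but u 0 ≤ B
  have hub : u 0 ≤ B := by
    have h1 := hbud (b 0) (hbpos 0).le
    have h2 : 0 ≤ b 0 * x (b 0) := by
      have := (hx (b 0) (hbpos 0).le).1
      positivity
    simp only [hu]; linarith
  -- choose n large
  obtain ⟨n, hn⟩ := exists_nat_gt (2 * γ)
  have hc := hchain n
  have hpos : 0 < B / (2 * γ) := by positivity
  have : (2 * γ) * (B / (2 * γ)) < (n : ℝ) * (B / (2 * γ)) :=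
    (mul_lt_mul_of_pos_right hn hpos)
  rw [mul_div_cancel₀ _ (by positivity : (2 * γ) ≠ 0)] at this
  linarith
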